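/- Let E = F_2^4 and let S = {S_1, S_2, S_3, S_4} be four pairwise trivially intersecting 2-dimensional subspaces of E. Let M_S be the paving q-matroid of rank 2 with ρ(U) = 1 for U ∈ S and ρ(U) = min{dim U, 2} otherwise. Then for every m > 1 there is no F_2-linear rank-metric code C ⊆ F_2^{4×m} with M_S = M[C]. -/

import Mathlib

open Matrix

variable {F : Type*} [Field F]

/-- Column space of a matrix: the span of its columns. -/
def colSpace {n m : ℕ} (M : Matrix (Fin n) (Fin m) F) : Submodule F (Fin n → F) :=
  Submodule.span F (Set.range Mᵀ)

lemma colSpace_le_iff {n m : ℕ} (M : Matrix (Fin n) (Fin m) F) (U : Submodule F (Fin n → F)) :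
    colSpace M ≤ U ↔ ∀ j, Mᵀ j ∈ U := by
  rw [colSpace, Submodule.span_le]; exact Set.range_subset_iff

/-- `C(U)`: the codewords of `C` whose column space is contained in `U`. -/
def codeCU {n m : ℕ} (C : Submodule F (Matrix (Fin n) (Fin m) F))
    (U : Submodule F (Fin n → F)) : Submodule F (Matrix (Fin n) (Fin m) F) where
  carrier := {M | M ∈ C ∧ colSpace M ≤ U}
  add_mem' := by
    rintro a b ⟨haC, ha⟩ ⟨hbC, hb⟩
    refine ⟨C.add_mem haC hbC, (colSpace_le_iff _ _).2 fun j => ?_⟩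
    have h := U.add_mem ((colSpace_le_iff a U).1 ha j) ((colSpace_le_iff b U).1 hb j)
    exact h
  zero_mem' := by
    exact ⟨C.zero_mem, (colSpace_le_iff _ _).2 fun j => U.zero_mem⟩
  smul_mem' := by
    rintro c a ⟨haC, ha⟩
    refine ⟨C.smul_mem c haC, (colSpace_le_iff _ _).2 fun j => ?_⟩
    have h := U.smul_mem c ((colSpace_le_iff a U).1 ha j)
    exact h

/-- Orthogonal complement with respect to the standard (dot-product) bilinear form. -/
def perp {n : ℕ} (U : Submodule F (Fin n → F)) : Submodule F (Fin n → F) where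
  carrier := {v | ∀ u ∈ U, v ⬝ᵥ u = 0}
  add_mem' := by
    intro a b ha hb u hu
    rw [add_dotProduct, ha u hu, hb u hu, add_zero]
  zero_mem' := by
    intro u hu
    rw [zero_dotProduct]
  smul_mem' := by
    intro c a ha u hu
    rw [smul_dotProduct, ha u hu, smul_zero]

/-- The minimum rank distance of a matrix code. -/
noncomputable def minRankDist {n m : ℕ} (C : Submodule F (Matrix (Fin n) (Fin m) F)) : ℕ :=
  sInf {r : ℕ | ∃ M ∈ C, M ≠ 0 ∧ M.rank = r}

/-- The rank function of the q-polymatroid associated to a matrix rank-metric code. -/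
noncomputable def rhoCode {n m : ℕ} (C : Submodule F (Matrix (Fin n) (Fin m) F))
    (U : Submodule F (Fin n → F)) : ℚ :=
  ((Module.finrank F C : ℚ) - (Module.finrank F (codeCU C (perp U)) : ℚ)) / (m : ℚ)


section Helpers

open Module

lemma mem_perp {n : ℕ} {U : Submodule F (Fin n → F)} {v : Fin n → F} :
    v ∈ perp U ↔ ∀ u ∈ U, v ⬝ᵥ u = 0 := Iff.rfl

lemma eq_zero_of_colSpace_le_bot {n m : ℕ} {M : Matrix (Fin n) (Fin m) F}
    (h : colSpace M ≤ ⊥) : M = 0 := by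
  ext i j
  have h2 := (colSpace_le_iff M ⊥).1 h j
  rw [Submodule.mem_bot] at h2
  have h3 := congrFun h2 i
  simpa [Matrix.transpose_apply] using h3

lemma perp_top {n : ℕ} : perp (⊤ : Submodule F (Fin n → F)) = ⊥ := by
  ext v
  simp only [Submodule.mem_bot]
  constructor
  · intro h
    funext i
    simpa [dotProduct_single] using h (Pi.single i 1) Submodule.mem_top
  · rintro rfl
    exact (perp ⊤).zero_mem

lemma perp_sup {n : ℕ} {U V : Submodule F (Fin n → F)} :
    perp (U ⊔ V) = perp U ⊓ perp V := by
  ext v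
  simp only [Submodule.mem_inf, mem_perp]
  constructor
  · intro h
    exact ⟨fun u hu => h u (Submodule.mem_sup_left hu),
           fun u hu => h u (Submodule.mem_sup_right hu)⟩
  · rintro ⟨h1, h2⟩ u hu
    rcases Submodule.mem_sup.1 hu with ⟨x, hx, y, hy, rfl⟩
    rw [dotProduct_add, h1 x hx, h2 y hy, add_zero]

lemma le_perp_perp {n : ℕ} (U : Submodule F (Fin n → F)) : U ≤ perp (perp U) := by
  intro u hu w hw
  rw [dotProduct_comm]
  exact hw u hu

/-- The dot-product pairing as a linear map into the dual space. -/
noncomputable def dotDual {n : ℕ} : (Fin n → F) →ₗ[F] Module.Dual F (Fin n → F) where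
  toFun v :=
    { toFun := fun w => v ⬝ᵥ w
      map_add' := fun a b => dotProduct_add v a b
      map_smul' := fun c a => by simp [dotProduct_smul, smul_eq_mul] }
  map_add' a b := by ext w; simp [add_dotProduct]
  map_smul' c a := by ext w; simp [smul_dotProduct, smul_eq_mul]

lemma finrank_perp_add {n : ℕ} (U : Submodule F (Fin n → F)) :
    finrank F (perp U) + finrank F U = n := by
  have hinj : Function.Injective (dotDual (F := F) (n := n)) := by
    intro a b hab
    funext i
    have h1 := congrArg (fun f : Module.Dual F (Fin n → F) => f (Pi.single i 1)) hab
    simpa [dotDual, dotProduct_single] using h1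
  have hd : finrank F (Fin n → F) = finrank F (Module.Dual F (Fin n → F)) :=
    (Subspace.dual_finrank_eq).symm
  have hsurj := (LinearMap.injective_iff_surjective_of_finrank_eq_finrank hd).1 hinj
  let e : (Fin n → F) ≃ₗ[F] Module.Dual F (Fin n → F) :=
    LinearEquiv.ofBijective dotDual ⟨hinj, hsurj⟩
  have hperp : perp U = (U.dualAnnihilator).comap (e : (Fin n → F) →ₗ[F] Module.Dual F (Fin n → F)) := by
    ext v
    simp only [Submodule.mem_comap, Submodule.mem_dualAnnihilator]
    rfl
  have e3 : finrank F (perp U) = finrank F U.dualAnnihilator := by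
    rw [hperp, Submodule.comap_equiv_eq_map_symm, LinearEquiv.finrank_map_eq]
  have h1 := Submodule.finrank_quotient_add_finrank U
  have h2 : finrank F ((Fin n → F) ⧸ U) = finrank F U.dualAnnihilator :=
    LinearEquiv.finrank_eq (Subspace.quotEquivAnnihilator U)
  have hn : finrank F (Fin n → F) = n := by simp
  omega

end Helpers

section Char2

variable {M : Type*} [AddCommGroup M] [Module (ZMod 2) M]

lemma z2_add_self (x : M) : x + x = 0 := by
  have h := two_smul (ZMod 2) x
  rw [show (2 : ZMod 2) = 0 by decide, zero_smul] at h
  exact h.symm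

lemma z2_neg (x : M) : -x = x := neg_eq_of_add_eq_zero_left (z2_add_self x)

end Char2

open Module in
lemma exists_fifth_plane (T : Fin 4 → Submodule (ZMod 2) (Fin 4 → ZMod 2))
    (hTdim : ∀ i, Module.finrank (ZMod 2) (T i) = 2)
    (hTdisj : ∀ i j, i ≠ j → T i ⊓ T j = ⊥) :
    ∃ T5 : Submodule (ZMod 2) (Fin 4 → ZMod 2),
      Module.finrank (ZMod 2) T5 = 2 ∧ (∀ i, T5 ⊓ T i = ⊥) ∧
      ∀ a b c : Fin 4 → ZMod 2, a ∈ T 0 → b ∈ T 1 → c ∈ T 1 →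
        a + b ∈ T 2 → a + c ∈ T 3 → a + b + c ∈ T5 := by
  have hE : Module.finrank (ZMod 2) (Fin 4 → ZMod 2) = 4 := by simp
  have hcompl : ∀ i j, i ≠ j → IsCompl (T i) (T j) := by
    intro i j hij
    refine ⟨disjoint_iff.2 (hTdisj i j hij), codisjoint_iff.2 ?_⟩
    apply Submodule.eq_top_of_finrank_eq
    have h1 := Submodule.finrank_sup_add_finrank_inf_eq (T i) (T j)
    rw [hTdisj i j hij, hTdim i, hTdim j] at h1
    simp only [finrank_bot] at h1
    rw [hE]; omega
  set q3 : (Fin 4 → ZMod 2) →ₗ[ZMod 2] (Fin 4 → ZMod 2) :=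
    (T 1).subtype.comp ((T 1).linearProjOfIsCompl (T 2) (hcompl 1 2 (by decide))) with hq3def
  set q4 : (Fin 4 → ZMod 2) →ₗ[ZMod 2] (Fin 4 → ZMod 2) :=
    (T 1).subtype.comp ((T 1).linearProjOfIsCompl (T 3) (hcompl 1 3 (by decide))) with hq4def
  have hq3mem : ∀ x, q3 x ∈ T 1 := fun x => Submodule.coe_mem _
  have hq4mem : ∀ x, q4 x ∈ T 1 := fun x => Submodule.coe_mem _
  have hq3sub : ∀ x, x + q3 x ∈ T 2 := by
    intro x
    have h : q3 x + (((T 2).linearProjOfIsCompl (T 1) (hcompl 1 2 (by decide)).symm x : Fin 4 → ZMod 2)) = x :=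
      Submodule.projection_add_projection_eq_self (hcompl 1 2 (by decide)) x
    have h2 : x + q3 x = (((T 2).linearProjOfIsCompl (T 1) (hcompl 1 2 (by decide)).symm x : Fin 4 → ZMod 2)) := by
      calc x + q3 x
          = (q3 x + (((T 2).linearProjOfIsCompl (T 1) (hcompl 1 2 (by decide)).symm x : Fin 4 → ZMod 2))) + q3 x := by
            rw [h]
        _ = (((T 2).linearProjOfIsCompl (T 1) (hcompl 1 2 (by decide)).symm x : Fin 4 → ZMod 2)) + (q3 x + q3 x) := by
            abel
        _ = _ := by rw [z2_add_self, add_zero]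
    rw [h2]
    exact Submodule.coe_mem _
  have hq4sub : ∀ x, x + q4 x ∈ T 3 := by
    intro x
    have h : q4 x + (((T 3).linearProjOfIsCompl (T 1) (hcompl 1 3 (by decide)).symm x : Fin 4 → ZMod 2)) = x :=
      Submodule.projection_add_projection_eq_self (hcompl 1 3 (by decide)) x
    have h2 : x + q4 x = (((T 3).linearProjOfIsCompl (T 1) (hcompl 1 3 (by decide)).symm x : Fin 4 → ZMod 2)) := by
      calc x + q4 x
          = (q4 x + (((T 3).linearProjOfIsCompl (T 1) (hcompl 1 3 (by decide)).symm x : Fin 4 → ZMod 2))) + q4 x := by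
            rw [h]
        _ = (((T 3).linearProjOfIsCompl (T 1) (hcompl 1 3 (by decide)).symm x : Fin 4 → ZMod 2)) + (q4 x + q4 x) := by
            abel
        _ = _ := by rw [z2_add_self, add_zero]
    rw [h2]
    exact Submodule.coe_mem _
  set G : (T 0 : Submodule (ZMod 2) (Fin 4 → ZMod 2)) →ₗ[ZMod 2] (Fin 4 → ZMod 2) :=
    (LinearMap.id + q3 + q4).comp (T 0).subtype with hGdef
  have hGapp : ∀ x : T 0, G x = (x : Fin 4 → ZMod 2) + q3 x + q4 x := fun x => rfl
  have hGinj : Function.Injective G := by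
    rw [← LinearMap.ker_eq_bot, eq_bot_iff]
    intro x hx
    rw [LinearMap.mem_ker, hGapp] at hx
    have h1 : (x : Fin 4 → ZMod 2) = q3 x + q4 x := by
      rw [add_assoc] at hx
      have h2 := eq_neg_of_add_eq_zero_left hx
      rwa [z2_neg] at h2
    have h2 : (x : Fin 4 → ZMod 2) ∈ T 0 ⊓ T 1 :=
      ⟨x.2, by rw [h1]; exact (T 1).add_mem (hq3mem _) (hq4mem _)⟩
    rw [hTdisj 0 1 (by decide), Submodule.mem_bot] at h2
    exact Subtype.ext h2
  refine ⟨LinearMap.range G, ?_, ?_, ?_⟩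
  · rw [LinearMap.finrank_range_of_inj hGinj]
    exact hTdim 0
  · intro i
    rw [eq_bot_iff]
    intro v hv
    obtain ⟨hv5, hvi⟩ := Submodule.mem_inf.1 hv
    obtain ⟨x, rfl⟩ := hv5
    rw [Submodule.mem_bot]
    have hx0 : (x : Fin 4 → ZMod 2) ∈ T 0 := x.2
    rw [hGapp] at hvi ⊢
    fin_cases i
    · -- i = 0
      have hs : q3 x + q4 x ∈ T 0 := by
        have h' : q3 (x : Fin 4 → ZMod 2) + q4 x =
            ((x : Fin 4 → ZMod 2) + q3 x + q4 x) - x := by abel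
        rw [h']
        exact (T 0).sub_mem hvi hx0
      have hs1 : q3 (x : Fin 4 → ZMod 2) + q4 x ∈ T 1 := (T 1).add_mem (hq3mem _) (hq4mem _)
      have hs0 : q3 (x : Fin 4 → ZMod 2) + q4 x = 0 := by
        have h4 : q3 (x : Fin 4 → ZMod 2) + q4 x ∈ T 0 ⊓ T 1 := ⟨hs, hs1⟩
        rw [hTdisj 0 1 (by decide), Submodule.mem_bot] at h4
        exact h4
      have heq : q3 (x : Fin 4 → ZMod 2) = q4 x := by
        have h5 := eq_neg_of_add_eq_zero_left hs0
        rwa [z2_neg] at h5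
      have h23 : (x : Fin 4 → ZMod 2) + q3 x ∈ T 2 ⊓ T 3 :=
        ⟨hq3sub _, by rw [heq]; exact hq4sub _⟩
      rw [hTdisj 2 3 (by decide), Submodule.mem_bot] at h23
      have ha1 : (x : Fin 4 → ZMod 2) = q3 x := by
        have h6 := eq_neg_of_add_eq_zero_left h23
        rwa [z2_neg] at h6
      have h7 : (x : Fin 4 → ZMod 2) ∈ T 0 ⊓ T 1 := ⟨hx0, by rw [ha1]; exact hq3mem _⟩
      rw [hTdisj 0 1 (by decide), Submodule.mem_bot] at h7
      rw [h7]
      simp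
    · -- i = 1
      have h1 : (x : Fin 4 → ZMod 2) ∈ T 1 := by
        have h' : (x : Fin 4 → ZMod 2) =
            ((x : Fin 4 → ZMod 2) + q3 x + q4 x) - q3 x - q4 x := by abel
        rw [h']
        exact (T 1).sub_mem ((T 1).sub_mem hvi (hq3mem _)) (hq4mem _)
      have h2 : (x : Fin 4 → ZMod 2) ∈ T 0 ⊓ T 1 := ⟨hx0, h1⟩
      rw [hTdisj 0 1 (by decide), Submodule.mem_bot] at h2
      rw [h2]
      simp
    · -- i = 2
      have hq4' : q4 (x : Fin 4 → ZMod 2) ∈ T 2 := by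
        have h' : q4 (x : Fin 4 → ZMod 2) =
            ((x : Fin 4 → ZMod 2) + q3 x + q4 x) - ((x : Fin 4 → ZMod 2) + q3 x) := by abel
        rw [h']
        exact (T 2).sub_mem hvi (hq3sub _)
      have h2 : q4 (x : Fin 4 → ZMod 2) ∈ T 1 ⊓ T 2 := ⟨hq4mem _, hq4'⟩
      rw [hTdisj 1 2 (by decide), Submodule.mem_bot] at h2
      have h3 : (x : Fin 4 → ZMod 2) ∈ T 3 := by
        have h4 := hq4sub (x : Fin 4 → ZMod 2)
        rwa [h2, add_zero] at h4
      have h5 : (x : Fin 4 → ZMod 2) ∈ T 0 ⊓ T 3 := ⟨hx0, h3⟩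
      rw [hTdisj 0 3 (by decide), Submodule.mem_bot] at h5
      rw [h5]
      simp
    · -- i = 3
      have hq3' : q3 (x : Fin 4 → ZMod 2) ∈ T 3 := by
        have h' : q3 (x : Fin 4 → ZMod 2) =
            ((x : Fin 4 → ZMod 2) + q3 x + q4 x) - ((x : Fin 4 → ZMod 2) + q4 x) := by abel
        rw [h']
        exact (T 3).sub_mem hvi (hq4sub _)
      have h2 : q3 (x : Fin 4 → ZMod 2) ∈ T 1 ⊓ T 3 := ⟨hq3mem _, hq3'⟩
      rw [hTdisj 1 3 (by decide), Submodule.mem_bot] at h2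
      have h3 : (x : Fin 4 → ZMod 2) ∈ T 2 := by
        have h4 := hq3sub (x : Fin 4 → ZMod 2)
        rwa [h2, add_zero] at h4
      have h5 : (x : Fin 4 → ZMod 2) ∈ T 0 ⊓ T 2 := ⟨hx0, h3⟩
      rw [hTdisj 0 2 (by decide), Submodule.mem_bot] at h5
      rw [h5]
      simp
  · intro a b c ha hb hc hab hac
    have hb' : b = q3 a := by
      have h1 : b + q3 a ∈ T 2 := by
        have h2 : b + q3 a = (a + b) + (a + q3 a) := by
          rw [show (a + b) + (a + q3 a) = (b + q3 a) + (a + a) by abel, z2_add_self, add_zero]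
        rw [h2]
        exact (T 2).add_mem hab (hq3sub a)
      have h3 : b + q3 a ∈ T 1 := (T 1).add_mem hb (hq3mem a)
      have h4 : b + q3 a ∈ T 1 ⊓ T 2 := ⟨h3, h1⟩
      rw [hTdisj 1 2 (by decide), Submodule.mem_bot] at h4
      have h5 := eq_neg_of_add_eq_zero_left h4
      rwa [z2_neg] at h5
    have hc' : c = q4 a := by
      have h1 : c + q4 a ∈ T 3 := by
        have h2 : c + q4 a = (a + c) + (a + q4 a) := by
          rw [show (a + c) + (a + q4 a) = (c + q4 a) + (a + a) by abel, z2_add_self, add_zero]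
        rw [h2]
        exact (T 3).add_mem hac (hq4sub a)
      have h3 : c + q4 a ∈ T 1 := (T 1).add_mem hc (hq4mem a)
      have h4 : c + q4 a ∈ T 1 ⊓ T 3 := ⟨h3, h1⟩
      rw [hTdisj 1 3 (by decide), Submodule.mem_bot] at h4
      have h5 := eq_neg_of_add_eq_zero_left h4
      rwa [z2_neg] at h5
    refine ⟨⟨a, ha⟩, ?_⟩
    rw [hb', hc']
    exact hGapp ⟨a, ha⟩


open scoped Classical in
/-- the paving q-matroid on `F_2^4` induced by four pairwise trivially
intersecting 2-spaces is not `m`-multilinear for any `m > 1`. -/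
theorem four_planes_qmatroid_not_multilinear
    (S : Fin 4 → Submodule (ZMod 2) (Fin 4 → ZMod 2))
    (hdim : ∀ i, Module.finrank (ZMod 2) (S i) = 2)
    (hdisj : ∀ i j, i ≠ j → S i ⊓ S j = ⊥)
    (m : ℕ) (hm : 1 < m) :
    ¬ ∃ C : Submodule (ZMod 2) (Matrix (Fin 4) (Fin m) (ZMod 2)),
        ∀ U : Submodule (ZMod 2) (Fin 4 → ZMod 2),
          rhoCode C U = if (∃ i, U = S i) then 1
            else ((min (Module.finrank (ZMod 2) U) 2 : ℕ) : ℚ) := by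
  rintro ⟨C, hC⟩
  have hm0 : (m : ℚ) ≠ 0 := Nat.cast_ne_zero.2 (by omega)
  have hE : Module.finrank (ZMod 2) (Fin 4 → ZMod 2) = 4 := by simp
  -- `C(⊥) = ⊥`
  have hCbot : codeCU C (⊥ : Submodule (ZMod 2) (Fin 4 → ZMod 2)) = ⊥ := by
    rw [eq_bot_iff]
    intro M hM
    rw [Submodule.mem_bot]
    exact eq_zero_of_colSpace_le_bot hM.2
  -- `dim C = 2m`
  have htopne : ¬ ∃ i, (⊤ : Submodule (ZMod 2) (Fin 4 → ZMod 2)) = S i := by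
    rintro ⟨i, hi⟩
    have h1 := hdim i
    rw [← hi, finrank_top, hE] at h1
    omega
  have htop := hC ⊤
  rw [if_neg htopne] at htop
  simp only [rhoCode] at htop
  rw [perp_top, hCbot] at htop
  simp only [finrank_bot, Nat.cast_zero, sub_zero, finrank_top, hE] at htop
  rw [div_eq_iff hm0] at htop
  have hdC : (Module.finrank (ZMod 2) C : ℚ) = 2 * m := by
    rw [htop]; norm_num
  -- `dim C(S i ^⊥) = m`
  have hTm : ∀ i, (Module.finrank (ZMod 2) (codeCU C (perp (S i))) : ℚ) = m := by
    intro i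
    have h := hC (S i)
    rw [if_pos ⟨i, rfl⟩] at h
    simp only [rhoCode] at h
    rw [div_eq_iff hm0] at h
    linarith
  have hTmnat : ∀ i, Module.finrank (ZMod 2) (codeCU C (perp (S i))) = m := by
    intro i
    exact_mod_cast hTm i
  -- the perps are pairwise trivially intersecting planes
  have hSsup : ∀ i j, i ≠ j → S i ⊔ S j = ⊤ := by
    intro i j hij
    apply Submodule.eq_top_of_finrank_eq
    have h1 := Submodule.finrank_sup_add_finrank_inf_eq (S i) (S j)
    rw [hdisj i j hij, hdim i, hdim j] at h1
    simp only [finrank_bot] at h1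
    rw [hE]; omega
  have hTdim : ∀ i, Module.finrank (ZMod 2) (perp (S i)) = 2 := by
    intro i
    have h1 := finrank_perp_add (S i)
    rw [hdim i] at h1
    omega
  have hTdisj : ∀ i j, i ≠ j → perp (S i) ⊓ perp (S j) = ⊥ := by
    intro i j hij
    rw [← perp_sup, hSsup i j hij, perp_top]
  -- the fifth plane
  obtain ⟨T5, hT5dim, hT5disj, hT5key⟩ :=
    exists_fifth_plane (fun i => perp (S i)) hTdim hTdisj
  have hU5dim : Module.finrank (ZMod 2) (perp T5) = 2 := by
    have h1 := finrank_perp_add T5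
    rw [hT5dim] at h1
    omega
  have hppT5 : perp (perp T5) = T5 := by
    refine (Submodule.eq_of_le_of_finrank_eq (le_perp_perp T5) ?_).symm
    have h1 := finrank_perp_add (perp T5)
    rw [hU5dim] at h1
    rw [hT5dim]
    omega
  have hU5ne : ¬ ∃ i, perp T5 = S i := by
    rintro ⟨i, hi⟩
    have h1 : perp (S i) = T5 := by rw [← hi, hppT5]
    have h2 := hT5disj i
    rw [h1, inf_idem] at h2
    rw [h2, finrank_bot] at hT5dim
    omega
  have h5 := hC (perp T5)
  rw [if_neg hU5ne] at h5
  simp only [rhoCode] at h5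
  rw [hppT5, hU5dim] at h5
  rw [div_eq_iff hm0] at h5
  have hf5 : Module.finrank (ZMod 2) (codeCU C T5) = 0 := by
    have h6 : ((min 2 2 : ℕ) : ℚ) = 2 := by norm_num
    rw [h6] at h5
    have h7 : (Module.finrank (ZMod 2) (codeCU C T5) : ℚ) = 0 := by linarith
    exact_mod_cast h7
  have hcode5 : codeCU C T5 = ⊥ := Submodule.finrank_eq_zero.mp hf5
  -- intersections of code pieces are trivial
  have hint : ∀ i j, i ≠ j → codeCU C (perp (S i)) ⊓ codeCU C (perp (S j)) = ⊥ := by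
    intro i j hij
    rw [eq_bot_iff]
    intro M hM
    obtain ⟨h1, h2⟩ := Submodule.mem_inf.1 hM
    rw [Submodule.mem_bot]
    apply eq_zero_of_colSpace_le_bot
    rw [← hTdisj i j hij]
    exact le_inf h1.2 h2.2
  have hCle : ∀ U, codeCU C U ≤ C := fun U M hM => hM.1
  have hdCn : Module.finrank (ZMod 2) C = 2 * m := by exact_mod_cast hdC
  have hsum : ∀ i j, i ≠ j → codeCU C (perp (S i)) ⊔ codeCU C (perp (S j)) = C := by
    intro i j hij
    apply Submodule.eq_of_le_of_finrank_eq (sup_le (hCle _) (hCle _))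
    have h1 := Submodule.finrank_sup_add_finrank_inf_eq (codeCU C (perp (S i)))
      (codeCU C (perp (S j)))
    rw [hint i j hij, hTmnat i, hTmnat j] at h1
    simp only [finrank_bot] at h1
    omega
  -- pick a nonzero codeword supported on `perp (S 0)`
  have hAne : codeCU C (perp (S 0)) ≠ ⊥ := by
    intro h
    have h1 := hTmnat 0
    rw [h, finrank_bot] at h1
    omega
  obtain ⟨x, hxA, hxne⟩ := (Submodule.ne_bot_iff _).1 hAne
  have hxC : x ∈ C := hxA.1
  have hx3 : x ∈ codeCU C (perp (S 2)) ⊔ codeCU C (perp (S 1)) := by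
    rw [hsum 2 1 (by decide)]; exact hxC
  have hx4 : x ∈ codeCU C (perp (S 3)) ⊔ codeCU C (perp (S 1)) := by
    rw [hsum 3 1 (by decide)]; exact hxC
  obtain ⟨y3, hy3, z3, hz3, h3⟩ := Submodule.mem_sup.1 hx3
  obtain ⟨y4, hy4, z4, hz4, h4⟩ := Submodule.mem_sup.1 hx4
  have hxz3 : x + z3 = y3 := by
    rw [← h3, add_assoc, z2_add_self, add_zero]
  have hxz4 : x + z4 = y4 := by
    rw [← h4, add_assoc, z2_add_self, add_zero]
  have hwmem : x + z3 + z4 ∈ codeCU C T5 := by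
    refine ⟨C.add_mem (C.add_mem hxC hz3.1) hz4.1, (colSpace_le_iff _ _).2 fun j => ?_⟩
    have ha : xᵀ j ∈ perp (S 0) := (colSpace_le_iff _ _).1 hxA.2 j
    have hb : z3ᵀ j ∈ perp (S 1) := (colSpace_le_iff _ _).1 hz3.2 j
    have hc : z4ᵀ j ∈ perp (S 1) := (colSpace_le_iff _ _).1 hz4.2 j
    have hab : xᵀ j + z3ᵀ j ∈ perp (S 2) := by
      have hy : (x + z3)ᵀ j ∈ perp (S 2) := by
        rw [hxz3]
        exact (colSpace_le_iff _ _).1 hy3.2 j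
      exact hy
    have hac : xᵀ j + z4ᵀ j ∈ perp (S 3) := by
      have hy : (x + z4)ᵀ j ∈ perp (S 3) := by
        rw [hxz4]
        exact (colSpace_le_iff _ _).1 hy4.2 j
      exact hy
    have key := hT5key (xᵀ j) (z3ᵀ j) (z4ᵀ j) ha hb hc hab hac
    exact key
  rw [hcode5, Submodule.mem_bot] at hwmem
  have hx : x = z3 + z4 := by
    rw [add_assoc] at hwmem
    have h6 := eq_neg_of_add_eq_zero_left hwmem
    rwa [z2_neg] at h6
  have hxB : x ∈ codeCU C (perp (S 1)) := by
    rw [hx]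
    exact (codeCU C (perp (S 1))).add_mem hz3 hz4
  apply hxne
  apply eq_zero_of_colSpace_le_bot
  rw [← hTdisj 0 1 (by decide)]
  exact le_inf hxA.2 hxB.2
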